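/- Suppose M₀ ≥ 0 satisfies f(A) − f(B) ≤ M₀ for all A, B ∈ Ω, and suppose β ≥ 768·M₀ with β > 0. Let (X_k)_{k≥0} be a sequence in ℝ^{n×p} such that ‖X₀ᵀX₀ − I_p‖_F ≤ 1/24, h(X_k) ≤ h(X₀) for all k ≥ 0, and ‖X_{k+1} − X_k‖_F ≤ 1/24 for all k ≥ 0. Then ‖X_kᵀX_k − I_p‖_F ≤ 1/12 for all k ≥ 0. -/

import Mathlib

open Matrix

attribute [local instance] Matrix.frobeniusNormedAddCommGroup Matrix.frobeniusNormedSpace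

namespace ExPen

noncomputable def finner {n p : ℕ} (A B : Matrix (Fin n) (Fin p) ℝ) : ℝ := (Aᵀ * B).trace

noncomputable def Phi {p : ℕ} (M : Matrix (Fin p) (Fin p) ℝ) : Matrix (Fin p) (Fin p) ℝ :=
  (1 / 2 : ℝ) • (M + Mᵀ)

noncomputable def Amap {n p : ℕ} (X : Matrix (Fin n) (Fin p) ℝ) : Matrix (Fin p) (Fin p) ℝ :=
  (3 / 2 : ℝ) • (1 : Matrix (Fin p) (Fin p) ℝ) - (1 / 2 : ℝ) • (Xᵀ * X)

noncomputable def g {n p : ℕ} (f : Matrix (Fin n) (Fin p) ℝ → ℝ)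
    (X : Matrix (Fin n) (Fin p) ℝ) : ℝ := f (X * Amap X)

noncomputable def hpen {n p : ℕ} (f : Matrix (Fin n) (Fin p) ℝ → ℝ) (β : ℝ)
    (X : Matrix (Fin n) (Fin p) ℝ) : ℝ := g f X + β / 4 * ‖Xᵀ * X - 1‖ ^ 2

noncomputable def dualCLM {n p : ℕ} (G : Matrix (Fin n) (Fin p) ℝ) :
    Matrix (Fin n) (Fin p) ℝ →L[ℝ] ℝ :=
  LinearMap.toContinuousLinearMap
    { toFun := fun D => (Gᵀ * D).trace
      map_add' := by intro D E; simp [Matrix.mul_add]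
      map_smul' := by intro c D; simp [Matrix.mul_smul] }

def HasGradAt {n p : ℕ} (φ : Matrix (Fin n) (Fin p) ℝ → ℝ)
    (X G : Matrix (Fin n) (Fin p) ℝ) : Prop :=
  HasFDerivAt φ (dualCLM G) X

noncomputable def specNorm {n p : ℕ} (X : Matrix (Fin n) (Fin p) ℝ) : ℝ :=
  ‖LinearMap.toContinuousLinearMap
    (Matrix.toEuclideanLin X : EuclideanSpace ℝ (Fin p) →ₗ[ℝ] EuclideanSpace ℝ (Fin n))‖

lemma posSemidef_tmul {n p : ℕ} (X : Matrix (Fin n) (Fin p) ℝ) : (Xᵀ * X).PosSemidef := by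
  simpa [Matrix.conjTranspose_eq_transpose_of_trivial] using
    Matrix.posSemidef_conjTranspose_mul_self X

noncomputable def psdSqrt {p : ℕ} {A : Matrix (Fin p) (Fin p) ℝ} (hA : A.PosSemidef) :
    Matrix (Fin p) (Fin p) ℝ :=
  (hA.1.eigenvectorUnitary : Matrix (Fin p) (Fin p) ℝ) *
    diagonal ((↑) ∘ (√·) ∘ hA.1.eigenvalues) *
    (star (hA.1.eigenvectorUnitary : Matrix (Fin p) (Fin p) ℝ))

noncomputable def Pst {n p : ℕ} (X : Matrix (Fin n) (Fin p) ℝ) : Matrix (Fin n) (Fin p) ℝ :=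
  X * (psdSqrt (posSemidef_tmul X))⁻¹


lemma dot_eq_inner {m : ℕ} (a b : Fin m → ℝ) :
    a ⬝ᵥ b = (inner ℝ ((WithLp.equiv 2 (Fin m → ℝ)).symm a)
      ((WithLp.equiv 2 (Fin m → ℝ)).symm b) : ℝ) := by
  simp [PiLp.inner_apply, dotProduct, RCLike.inner_apply, mul_comm]

lemma norm_sq_euclid {m : ℕ} (w : EuclideanSpace ℝ (Fin m)) :
    ‖w‖ ^ 2 = (WithLp.equiv 2 (Fin m → ℝ) w) ⬝ᵥ (WithLp.equiv 2 (Fin m → ℝ) w) := by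
  rw [dot_eq_inner, (WithLp.equiv 2 (Fin m → ℝ)).symm_apply_apply,
    real_inner_self_eq_norm_sq]

lemma dot_self_nonneg' {m : ℕ} (z : Fin m → ℝ) : 0 ≤ z ⬝ᵥ z := by
  have := norm_sq_euclid ((WithLp.equiv 2 (Fin m → ℝ)).symm z)
  simp at this
  rw [← this]; positivity

lemma le_of_sq_le_sq' {a b : ℝ} (ha : 0 ≤ a) (hb : 0 ≤ b) (h : a^2 ≤ b^2) : a ≤ b := by
  nlinarith

lemma specNorm_nonneg {n p : ℕ} (X : Matrix (Fin n) (Fin p) ℝ) : 0 ≤ specNorm X :=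
  norm_nonneg _

lemma specNorm_le {n p : ℕ} (X : Matrix (Fin n) (Fin p) ℝ) {c : ℝ} (hc : 0 ≤ c)
    (h : ∀ v : EuclideanSpace ℝ (Fin p), ‖Matrix.toEuclideanLin X v‖ ≤ c * ‖v‖) :
    specNorm X ≤ c := by
  apply ContinuousLinearMap.opNorm_le_bound _ hc
  intro v
  simpa using h v

lemma le_specNorm {n p : ℕ} (X : Matrix (Fin n) (Fin p) ℝ) (v : EuclideanSpace ℝ (Fin p)) :
    ‖Matrix.toEuclideanLin X v‖ ≤ specNorm X * ‖v‖ := by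
  simpa [specNorm] using (LinearMap.toContinuousLinearMap
    (Matrix.toEuclideanLin X : EuclideanSpace ℝ (Fin p) →ₗ[ℝ] EuclideanSpace ℝ (Fin n))).le_opNorm v

lemma specNorm_add_le {n p : ℕ} (Y Z : Matrix (Fin n) (Fin p) ℝ) :
    specNorm (Y + Z) ≤ specNorm Y + specNorm Z := by
  apply specNorm_le _ (add_nonneg (specNorm_nonneg Y) (specNorm_nonneg Z))
  intro v
  rw [map_add]
  calc ‖Matrix.toEuclideanLin Y v + Matrix.toEuclideanLin Z v‖
      ≤ ‖Matrix.toEuclideanLin Y v‖ + ‖Matrix.toEuclideanLin Z v‖ := norm_add_le _ _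
    _ ≤ specNorm Y * ‖v‖ + specNorm Z * ‖v‖ := add_le_add (le_specNorm Y v) (le_specNorm Z v)
    _ = (specNorm Y + specNorm Z) * ‖v‖ := by ring

lemma norm_toEuclideanLin_le {a b : ℕ} (M : Matrix (Fin a) (Fin b) ℝ)
    (v : EuclideanSpace ℝ (Fin b)) :
    ‖Matrix.toEuclideanLin M v‖ ≤ ‖M‖ * ‖v‖ := by
  have hM : ‖M‖ ^ 2 = ∑ i, ∑ j, ‖M i j‖ ^ 2 := by
    rw [Matrix.frobenius_norm_def, ← Real.rpow_natCast _ 2, ← Real.rpow_mul (by positivity)]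
    norm_num
  apply le_of_sq_le_sq' (norm_nonneg _) (by positivity)
  have h1 : ‖Matrix.toEuclideanLin M v‖ ^ 2
      = ∑ i, ((M *ᵥ (WithLp.equiv 2 (Fin b → ℝ) v)) i) ^ 2 := by
    rw [norm_sq_euclid]
    simp only [dotProduct, sq]
    rfl
  rw [h1]
  have h2 : ∀ i, ((M *ᵥ (WithLp.equiv 2 (Fin b → ℝ) v)) i) ^ 2
      ≤ (∑ j, ‖M i j‖ ^ 2) * ‖v‖ ^ 2 := by
    intro i
    have : (M *ᵥ (WithLp.equiv 2 (Fin b → ℝ) v)) i = (M i) ⬝ᵥ (WithLp.equiv 2 (Fin b → ℝ) v) := rfl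
    rw [this, dot_eq_inner]
    have hcs := abs_real_inner_le_norm ((WithLp.equiv 2 (Fin b → ℝ)).symm (M i))
      ((WithLp.equiv 2 (Fin b → ℝ)).symm (WithLp.equiv 2 (Fin b → ℝ) v))
    have hr : ‖(WithLp.equiv 2 (Fin b → ℝ)).symm (M i)‖ ^ 2 = ∑ j, ‖M i j‖ ^ 2 := by
      have := norm_sq_euclid ((WithLp.equiv 2 (Fin b → ℝ)).symm (M i))
      simp only [(WithLp.equiv 2 (Fin b → ℝ)).apply_symm_apply] at this
      rw [this]
      simp [dotProduct, sq]
    have hv : (WithLp.equiv 2 (Fin b → ℝ)).symm (WithLp.equiv 2 (Fin b → ℝ) v) = v :=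
      (WithLp.equiv 2 (Fin b → ℝ)).symm_apply_apply v
    rw [hv] at hcs
    calc (inner ℝ ((WithLp.equiv 2 (Fin b → ℝ)).symm (M i)) v : ℝ) ^ 2
        ≤ (‖(WithLp.equiv 2 (Fin b → ℝ)).symm (M i)‖ * ‖v‖) ^ 2 := by
          rw [← sq_abs]
          exact pow_le_pow_left₀ (abs_nonneg _) hcs 2
      _ = (∑ j, ‖M i j‖ ^ 2) * ‖v‖ ^ 2 := by rw [mul_pow, hr]
  calc ∑ i, ((M *ᵥ (WithLp.equiv 2 (Fin b → ℝ) v)) i) ^ 2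
      ≤ ∑ i, (∑ j, ‖M i j‖ ^ 2) * ‖v‖ ^ 2 := Finset.sum_le_sum (fun i _ => h2 i)
    _ = (∑ i, ∑ j, ‖M i j‖ ^ 2) * ‖v‖ ^ 2 := by rw [Finset.sum_mul]
    _ = ‖M‖ ^ 2 * ‖v‖ ^ 2 := by rw [hM]
    _ = (‖M‖ * ‖v‖) ^ 2 := by ring

lemma specNorm_le_frobenius {a b : ℕ} (M : Matrix (Fin a) (Fin b) ℝ) :
    specNorm M ≤ ‖M‖ :=
  specNorm_le _ (norm_nonneg M) (norm_toEuclideanLin_le M)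


lemma dot_symm {p : ℕ} (T : Matrix (Fin p) (Fin p) ℝ) (hT : Tᵀ = T) (a b : Fin p → ℝ) :
    a ⬝ᵥ (T *ᵥ b) = (T *ᵥ a) ⬝ᵥ b := by
  rw [Matrix.dotProduct_mulVec, ← Matrix.mulVec_transpose, hT]

lemma dot_gram {n p : ℕ} (Y : Matrix (Fin n) (Fin p) ℝ) (z : Fin p → ℝ) :
    z ⬝ᵥ ((Yᵀ * Y) *ᵥ z) = (Y *ᵥ z) ⬝ᵥ (Y *ᵥ z) := by
  rw [← Matrix.mulVec_mulVec, Matrix.dotProduct_mulVec, Matrix.vecMul_transpose]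

lemma dot_gram_norm {n p : ℕ} (Y : Matrix (Fin n) (Fin p) ℝ) (z : Fin p → ℝ) :
    z ⬝ᵥ ((Yᵀ * Y) *ᵥ z)
      = ‖Matrix.toEuclideanLin Y ((WithLp.equiv 2 (Fin p → ℝ)).symm z)‖ ^ 2 := by
  rw [dot_gram, norm_sq_euclid]
  simp

lemma quad_le {b : ℕ} (M : Matrix (Fin b) (Fin b) ℝ) (z : Fin b → ℝ) :
    z ⬝ᵥ (M *ᵥ z) ≤ ‖M‖ * (z ⬝ᵥ z) := by
  have h1 : z ⬝ᵥ (M *ᵥ z) = (inner ℝ ((WithLp.equiv 2 (Fin b → ℝ)).symm z)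
      (Matrix.toEuclideanLin M ((WithLp.equiv 2 (Fin b → ℝ)).symm z)) : ℝ) := by
    rw [dot_eq_inner]
    simp
  have h2 := real_inner_le_norm ((WithLp.equiv 2 (Fin b → ℝ)).symm z)
      (Matrix.toEuclideanLin M ((WithLp.equiv 2 (Fin b → ℝ)).symm z))
  have h3 := norm_toEuclideanLin_le M ((WithLp.equiv 2 (Fin b → ℝ)).symm z)
  have h4 : z ⬝ᵥ z = ‖(WithLp.equiv 2 (Fin b → ℝ)).symm z‖ ^ 2 := by
    rw [dot_eq_inner, real_inner_self_eq_norm_sq]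
  rw [h1, h4]
  nlinarith [norm_nonneg ((WithLp.equiv 2 (Fin b → ℝ)).symm z)]

lemma specNorm_le_of_gram {n p : ℕ} (X : Matrix (Fin n) (Fin p) ℝ) {c d : ℝ} (hd : 0 ≤ d)
    (h : ‖Xᵀ * X - 1‖ ≤ c) (hcd : 1 + c ≤ d ^ 2) : specNorm X ≤ d := by
  apply specNorm_le X hd
  intro v
  set z := WithLp.equiv 2 (Fin p → ℝ) v with hzdef
  have hv : (WithLp.equiv 2 (Fin p → ℝ)).symm z = v := by
    simp [hzdef]
  have h1 : ‖Matrix.toEuclideanLin X v‖ ^ 2 = z ⬝ᵥ ((Xᵀ * X) *ᵥ z) := by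
    rw [dot_gram_norm, hv]
  have h2 : (Xᵀ * X) *ᵥ z = z + (Xᵀ * X - 1) *ᵥ z := by
    rw [Matrix.sub_mulVec, Matrix.one_mulVec]
    abel
  have h3 : z ⬝ᵥ ((Xᵀ * X - 1) *ᵥ z) ≤ c * (z ⬝ᵥ z) :=
    le_trans (quad_le _ z) (mul_le_mul_of_nonneg_right h (dot_self_nonneg' z))
  have h5 : z ⬝ᵥ z = ‖v‖ ^ 2 := by
    rw [← hv, norm_sq_euclid]
    simp
  apply le_of_sq_le_sq' (norm_nonneg _) (by positivity)
  have hvn : 0 ≤ ‖v‖ ^ 2 := by positivity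
  calc ‖Matrix.toEuclideanLin X v‖ ^ 2 = z ⬝ᵥ z + z ⬝ᵥ ((Xᵀ * X - 1) *ᵥ z) := by
        rw [h1, h2, dotProduct_add]
    _ ≤ ‖v‖ ^ 2 + c * ‖v‖ ^ 2 := by rw [h5] at h3 ⊢; linarith
    _ = (1 + c) * ‖v‖ ^ 2 := by ring
    _ ≤ d ^ 2 * ‖v‖ ^ 2 := mul_le_mul_of_nonneg_right hcd hvn
    _ = (d * ‖v‖) ^ 2 := by ring

lemma matrix_id {p : ℕ} (S : Matrix (Fin p) (Fin p) ℝ) :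
    (4:ℝ) • (1 : Matrix (Fin p) (Fin p) ℝ)
      - (4:ℝ) • (((3/2:ℝ) • 1 - (1/2:ℝ) • S) * (S * ((3/2:ℝ) • 1 - (1/2:ℝ) • S)))
    = (S - 1) * (((4:ℝ) • 1 - S) * (S - 1)) := by
  simp only [Matrix.sub_mul, Matrix.mul_sub, smul_mul_assoc, mul_smul_comm, smul_smul,
    one_mul, mul_one, smul_sub, sub_smul, mul_assoc]
  module

lemma specNorm_mul_Amap_le {n p : ℕ} (X : Matrix (Fin n) (Fin p) ℝ)
    (hX : specNorm X ≤ 2) : specNorm (X * Amap X) ≤ 1 := by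
  set S := Xᵀ * X with hSdef
  have hStr : Sᵀ = S := by
    rw [hSdef, Matrix.transpose_mul, Matrix.transpose_transpose]
  have hAtr : (Amap X)ᵀ = Amap X := by
    rw [Amap]
    simp [Matrix.transpose_smul, Matrix.transpose_sub, hStr, ← hSdef]
  apply specNorm_le _ zero_le_one
  intro v
  set z := WithLp.equiv 2 (Fin p → ℝ) v with hzdef
  have hv : (WithLp.equiv 2 (Fin p → ℝ)).symm z = v := by simp [hzdef]
  set A := Amap X with hAdef
  set w : Fin p → ℝ := A *ᵥ z with hwdef
  set u : Fin p → ℝ := (S - 1) *ᵥ z with hudef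
  -- squared norm equals w ⬝ (S w)
  have h1 : ‖Matrix.toEuclideanLin (X * A) v‖ ^ 2 = w ⬝ᵥ (S *ᵥ w) := by
    rw [← hv, ← dot_gram_norm]
    have hYtY : (X * A)ᵀ * (X * A) = A * (S * A) := by
      rw [Matrix.transpose_mul, hAtr, Matrix.mul_assoc, ← Matrix.mul_assoc Xᵀ X A, ← hSdef]
    rw [hYtY, ← Matrix.mulVec_mulVec, dot_symm A hAtr, ← hwdef, Matrix.mulVec_mulVec]
  -- key identity
  have h2 : 4 * (z ⬝ᵥ z) - 4 * (w ⬝ᵥ (S *ᵥ w)) = u ⬝ᵥ (((4:ℝ) • 1 - S) *ᵥ u) := by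
    have := congrArg (fun T => z ⬝ᵥ (T *ᵥ z)) (matrix_id S)
    have hlhs : z ⬝ᵥ ((((4:ℝ) • (1 : Matrix (Fin p) (Fin p) ℝ))
        - (4:ℝ) • (((3/2:ℝ) • 1 - (1/2:ℝ) • S) * (S * ((3/2:ℝ) • 1 - (1/2:ℝ) • S)))) *ᵥ z)
        = 4 * (z ⬝ᵥ z) - 4 * (w ⬝ᵥ (S *ᵥ w)) := by
      rw [Matrix.sub_mulVec, dotProduct_sub, Matrix.smul_mulVec,
        Matrix.smul_mulVec, Matrix.one_mulVec, dotProduct_smul,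
        dotProduct_smul]
      have : z ⬝ᵥ ((((3/2:ℝ) • 1 - (1/2:ℝ) • S) * (S * ((3/2:ℝ) • 1 - (1/2:ℝ) • S))) *ᵥ z)
          = w ⬝ᵥ (S *ᵥ w) := by
        have hA' : A = (3/2:ℝ) • 1 - (1/2:ℝ) • S := rfl
        rw [← hA', ← Matrix.mulVec_mulVec, dot_symm A hAtr, ← hwdef, Matrix.mulVec_mulVec,
          ← Matrix.mulVec_mulVec, ← hwdef]
      rw [this]
      simp [smul_eq_mul]
    have hrhs : z ⬝ᵥ (((S - 1) * (((4:ℝ) • 1 - S) * (S - 1))) *ᵥ z)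
        = u ⬝ᵥ (((4:ℝ) • 1 - S) *ᵥ u) := by
      have hS1tr : (S - 1)ᵀ = S - 1 := by
        rw [Matrix.transpose_sub, hStr, Matrix.transpose_one]
      rw [← Matrix.mulVec_mulVec, dot_symm (S - 1) hS1tr, ← hudef, Matrix.mulVec_mulVec,
        ← Matrix.mulVec_mulVec, ← hudef]
    rw [hlhs, hrhs] at this
    exact this
  -- bound u ⬝ (S u) ≤ 4 u ⬝ u
  have h3 : u ⬝ᵥ (S *ᵥ u) ≤ 4 * (u ⬝ᵥ u) := by
    have hgram : u ⬝ᵥ (S *ᵥ u)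
        = ‖Matrix.toEuclideanLin X ((WithLp.equiv 2 (Fin p → ℝ)).symm u)‖ ^ 2 := by
      rw [hSdef]
      exact dot_gram_norm X u
    have hun : ‖(WithLp.equiv 2 (Fin p → ℝ)).symm u‖ ^ 2 = u ⬝ᵥ u := by
      rw [norm_sq_euclid]
      simp
    have hb := le_specNorm X ((WithLp.equiv 2 (Fin p → ℝ)).symm u)
    have hb2 : ‖Matrix.toEuclideanLin X ((WithLp.equiv 2 (Fin p → ℝ)).symm u)‖
        ≤ 2 * ‖(WithLp.equiv 2 (Fin p → ℝ)).symm u‖ := by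
      calc ‖Matrix.toEuclideanLin X ((WithLp.equiv 2 (Fin p → ℝ)).symm u)‖
          ≤ specNorm X * ‖(WithLp.equiv 2 (Fin p → ℝ)).symm u‖ := hb
        _ ≤ 2 * ‖(WithLp.equiv 2 (Fin p → ℝ)).symm u‖ :=
            mul_le_mul_of_nonneg_right hX (norm_nonneg _)
    nlinarith [norm_nonneg (Matrix.toEuclideanLin X ((WithLp.equiv 2 (Fin p → ℝ)).symm u)),
      norm_nonneg ((WithLp.equiv 2 (Fin p → ℝ)).symm u), hgram, hun]
  have h4 : u ⬝ᵥ (((4:ℝ) • 1 - S) *ᵥ u) = 4 * (u ⬝ᵥ u) - u ⬝ᵥ (S *ᵥ u) := by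
    rw [Matrix.sub_mulVec, dotProduct_sub, Matrix.smul_mulVec,
      Matrix.one_mulVec, dotProduct_smul]
    simp [smul_eq_mul]
  have h5 : z ⬝ᵥ z = ‖v‖ ^ 2 := by
    rw [← hv, norm_sq_euclid]
    simp
  apply le_of_sq_le_sq' (norm_nonneg _) (by positivity)
  have : w ⬝ᵥ (S *ᵥ w) ≤ z ⬝ᵥ z := by linarith
  calc ‖Matrix.toEuclideanLin (X * A) v‖ ^ 2 = w ⬝ᵥ (S *ᵥ w) := h1
    _ ≤ z ⬝ᵥ z := this
    _ = ‖v‖ ^ 2 := h5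
    _ = (1 * ‖v‖) ^ 2 := by ring

theorem statement_19 {n p : ℕ} (f : Matrix (Fin n) (Fin p) ℝ → ℝ) (β M₀ : ℝ)
    (hM₀ : 0 ≤ M₀)
    (hosc : ∀ A B : Matrix (Fin n) (Fin p) ℝ, specNorm A ≤ 13 / 12 →
      specNorm B ≤ 13 / 12 → f A - f B ≤ M₀)
    (hβ : 768 * M₀ ≤ β) (hβ0 : 0 < β)
    (X : ℕ → Matrix (Fin n) (Fin p) ℝ)
    (hX0 : ‖(X 0)ᵀ * X 0 - 1‖ ≤ 1 / 24)
    (hdec : ∀ k : ℕ, hpen f β (X k) ≤ hpen f β (X 0))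
    (hstep : ∀ k : ℕ, ‖X (k + 1) - X k‖ ≤ 1 / 24) :
    ∀ k : ℕ, ‖(X k)ᵀ * X k - 1‖ ≤ 1 / 12 := by
  intro k
  induction k with
  | zero => linarith [hX0]
  | succ k ih =>
    have hXk : specNorm (X k) ≤ 47/24 :=
      specNorm_le_of_gram _ (by norm_num) ih (by norm_num)
    have hdiff : specNorm (X (k+1) - X k) ≤ 1/24 :=
      le_trans (specNorm_le_frobenius _) (hstep k)
    have hXk1 : specNorm (X (k+1)) ≤ 2 := by
      have heq : X (k+1) = (X (k+1) - X k) + X k := by abel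
      calc specNorm (X (k+1)) = specNorm ((X (k+1) - X k) + X k) := by rw [← heq]
        _ ≤ specNorm (X (k+1) - X k) + specNorm (X k) := specNorm_add_le _ _
        _ ≤ 1/24 + 47/24 := add_le_add hdiff hXk
        _ = 2 := by norm_num
    have hX0s : specNorm (X 0) ≤ 2 :=
      specNorm_le_of_gram _ (by norm_num) hX0 (by norm_num)
    have hA1 : specNorm (X 0 * Amap (X 0)) ≤ 13/12 :=
      le_trans (specNorm_mul_Amap_le _ hX0s) (by norm_num)
    have hA2 : specNorm (X (k+1) * Amap (X (k+1))) ≤ 13/12 :=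
      le_trans (specNorm_mul_Amap_le _ hXk1) (by norm_num)
    have hg : f (X 0 * Amap (X 0)) - f (X (k+1) * Amap (X (k+1))) ≤ M₀ := hosc _ _ hA1 hA2
    have hd := hdec (k+1)
    simp only [hpen, g] at hd
    set t := ‖(X (k+1))ᵀ * X (k+1) - 1‖ with htdef
    set s := ‖(X 0)ᵀ * X 0 - 1‖ with hsdef
    have ht : (0:ℝ) ≤ t := norm_nonneg _
    have hs : (0:ℝ) ≤ s := norm_nonneg _
    have hs2 : s ^ 2 ≤ 1/576 := by nlinarith
    have htpos : (0:ℝ) < t + 1/12 := by linarith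
    nlinarith [mul_pos hβ0 htpos, sq_nonneg t, mul_nonneg (le_of_lt hβ0) (sq_nonneg t)]


end ExPen
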